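/- Let X₁(t) and X₂(t) be the α-dissipative solutions of the Lagrangian system with initial data X₁(0), X₂(0) ∈ F. Then for every t ≥ 0, ‖U₁(·,t) − U₂(·,t)‖_{L∞(ℝ)} ≤ ‖U₁(·,0) − U₂(·,0)‖_{L∞(ℝ)} + (1/4)·∫₀^{t} ‖G₁₂(·,s)‖_{L¹(ℝ)} ds. -/

import Mathlib

open MeasureTheory Filter Set Real
open scoped ENNReal Classical

noncomputable section

/-- A Lagrangian quadruple `X = (y, U, H, V)` of real-valued functions on `ℝ`. -/
structure LagQuad where
  y : ℝ → ℝ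
  U : ℝ → ℝ
  H : ℝ → ℝ
  V : ℝ → ℝ

/-- The real-valued `L^p` norm of a function `ℝ → ℝ` (Lebesgue measure). -/
def nrm (p : ℝ≥0∞) (f : ℝ → ℝ) : ℝ := (eLpNorm f p volume).toReal

/-- `f` is bounded and Lipschitz. -/
def bddLip (f : ℝ → ℝ) : Prop := (∃ C, ∀ x, |f x| ≤ C) ∧ (∃ K, LipschitzWith K f)

/-- The set `F` of Lagrangian coordinates, for the dissipation parameter `α`. -/
def inF (α : ℝ) (X : LagQuad) : Prop :=
  bddLip (fun ξ => X.y ξ - ξ) ∧ bddLip X.U ∧ bddLip X.H ∧ bddLip X.V ∧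
  (∀ᵐ (ξ : ℝ) ∂volume, 0 ≤ deriv X.y ξ) ∧ (∀ᵐ (ξ : ℝ) ∂volume, 0 ≤ deriv X.H ξ) ∧
  (∃ c > (0 : ℝ), ∀ᵐ (ξ : ℝ) ∂volume, c ≤ deriv X.y ξ + deriv X.H ξ) ∧
  (∀ᵐ (ξ : ℝ) ∂volume, deriv X.y ξ * deriv X.V ξ = (deriv X.U ξ) ^ 2) ∧
  (∀ᵐ (ξ : ℝ) ∂volume, 0 ≤ deriv X.V ξ ∧ deriv X.V ξ ≤ deriv X.H ξ) ∧
  (α = 1 → ∀ᵐ (ξ : ℝ) ∂volume,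
    (deriv X.y ξ = 0 → deriv X.V ξ = 0) ∧ (0 < deriv X.y ξ → deriv X.V ξ = deriv X.H ξ)) ∧
  (α < 1 → ∃ κ : ℝ → ℝ, (∀ ξ, κ ξ = 1 - α ∨ κ ξ = 1) ∧
    (∀ᵐ (ξ : ℝ) ∂volume, deriv X.V ξ = κ ξ * deriv X.H ξ ∧ (deriv X.U ξ < 0 → κ ξ = 1)))

/-- The subset `F₀ = {X ∈ F : y + H = id}`. -/
def inF0 (α : ℝ) (X : LagQuad) : Prop := inF α X ∧ ∀ ξ, X.y ξ + X.H ξ = ξ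

/-- The wave-breaking time `τ` of a Lagrangian quadruple. -/
def tauOf (X : LagQuad) (ξ : ℝ) : ℝ≥0∞ :=
  if deriv X.U ξ < 0 then ENNReal.ofReal (-2 * deriv X.y ξ / deriv X.U ξ)
  else if deriv X.U ξ = 0 ∧ deriv X.y ξ = 0 then 0
  else ⊤

/-- `A = {ξ : U'(ξ) ≥ 0}`. -/
def Aset (X : LagQuad) : Set ℝ := {ξ | 0 ≤ deriv X.U ξ}

/-- `Ω(t) = (A₁ ∩ A₂) ∪ {ξ : t < τ₁(ξ) = τ₂(ξ) < ∞}`. -/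
def OmegaT (τ₁ τ₂ : ℝ → ℝ≥0∞) (t : ℝ) (X₁ X₂ : LagQuad) : Set ℝ :=
  (Aset X₁ ∩ Aset X₂) ∪ {ξ | ENNReal.ofReal t < τ₁ ξ ∧ τ₁ ξ = τ₂ ξ ∧ τ₂ ξ < ⊤}

/-- `G₁₂ = |V₁' − V₂'|·1_Ω + max(V₁',V₂')·1_{Ωᶜ}`. -/
def GfunT (τ₁ τ₂ : ℝ → ℝ≥0∞) (t : ℝ) (X₁ X₂ : LagQuad) (ξ : ℝ) : ℝ :=
  (OmegaT τ₁ τ₂ t X₁ X₂).indicator (fun η => |deriv X₁.V η - deriv X₂.V η|) ξ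
    + ((OmegaT τ₁ τ₂ t X₁ X₂)ᶜ).indicator (fun η => max (deriv X₁.V η) (deriv X₂.V η)) ξ

/-- The Lagrangian distance, with wave-breaking times `τ₁, τ₂` and time parameter `t`. -/
def ddT (τ₁ τ₂ : ℝ → ℝ≥0∞) (t : ℝ) (X₁ X₂ : LagQuad) : ℝ :=
  nrm ⊤ (fun ξ => X₁.y ξ - X₂.y ξ) + nrm ⊤ (fun ξ => X₁.U ξ - X₂.U ξ)
    + nrm 2 (fun ξ => deriv X₁.y ξ - deriv X₂.y ξ)
    + nrm 2 (fun ξ => deriv X₁.U ξ - deriv X₂.U ξ)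
    + nrm ⊤ (fun ξ => X₁.H ξ - X₂.H ξ)
    + nrm 1 (GfunT τ₁ τ₂ t X₁ X₂) + nrm 2 (GfunT τ₁ τ₂ t X₁ X₂)

/-- The metric `d` on `F`. -/
def dmet (X₁ X₂ : LagQuad) : ℝ := ddT (tauOf X₁) (tauOf X₂) 0 X₁ X₂

/-- The norm `‖X_A − X_B‖` (sum of the four sup-norms). -/
def xnorm (XA XB : LagQuad) : ℝ :=
  nrm ⊤ (fun ξ => XA.y ξ - XB.y ξ) + nrm ⊤ (fun ξ => XA.U ξ - XB.U ξ)
    + nrm ⊤ (fun ξ => XA.H ξ - XB.H ξ) + nrm ⊤ (fun ξ => XA.V ξ - XB.V ξ)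

/-- The relabelling group `G`. -/
def inG (f : ℝ → ℝ) : Prop :=
  Function.Bijective f ∧ bddLip (fun x => f x - x) ∧
    bddLip (fun x => Function.invFun f x - x) ∧
    MemLp (fun x => deriv f x - 1) 2 volume

/-- The relabelling action `X • f`. -/
def act (X : LagQuad) (f : ℝ → ℝ) : LagQuad :=
  ⟨fun ξ => X.y (f ξ), fun ξ => X.U (f ξ), fun ξ => X.H (f ξ), fun ξ => X.V (f ξ)⟩

/-- `Π(X) = X • (y + H)⁻¹`. -/
def PiMap (X : LagQuad) : LagQuad := act X (Function.invFun (fun ξ => X.y ξ + X.H ξ))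

/-- `J(X_A, X_B) = inf_{f,g ∈ G} ( d(X_A, X_B•f) + d(X_A•g, X_B) )`. -/
def Jmet (XA XB : LagQuad) : ℝ :=
  sInf {r | ∃ f g, inG f ∧ inG g ∧ r = dmet XA (act XB f) + dmet (act XA g) XB}

/-- `d_F`, the infimum over finite sequences in `F₀` joining `Π X_A` to `Π X_B`. -/
def dFmet (α : ℝ) (XA XB : LagQuad) : ℝ :=
  sInf {r | ∃ (N : ℕ) (Xs : ℕ → LagQuad), (∀ n ≤ N, inF0 α (Xs n)) ∧
    Xs 0 = PiMap XA ∧ Xs N = PiMap XB ∧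
    r = ∑ n ∈ Finset.range N, Jmet (Xs (n + 1)) (Xs n)}

/-- The set of points that have experienced wave breaking by time `t`. -/
def breakSet (X0 : LagQuad) (t : ℝ) : Set ℝ :=
  {η | 0 < tauOf X0 η ∧ tauOf X0 η ≤ ENNReal.ofReal t}

/-- `V(ξ,t) = ∫_{−∞}^ξ V₀'(η)(1 − α·1_{t ≥ τ(η) > 0}(η)) dη`. -/
def Vsol (α : ℝ) (X0 : LagQuad) (t : ℝ) (ξ : ℝ) : ℝ :=
  ∫ η in Set.Iio ξ,
    deriv X0.V η * (1 - α * (breakSet X0 t).indicator (fun _ => (1 : ℝ)) η)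

/-- `U(ξ,t) = U₀(ξ) + ∫₀ᵗ (½ V(ξ,s) − ¼ V_∞(s)) ds`. -/
def Usol (α : ℝ) (X0 : LagQuad) (t : ℝ) (ξ : ℝ) : ℝ :=
  X0.U ξ + ∫ s in (0:ℝ)..t,
    ((1 / 2) * Vsol α X0 s ξ - (1 / 4) * limUnder Filter.atTop (Vsol α X0 s))

/-- `y(ξ,t) = y₀(ξ) + ∫₀ᵗ U(ξ,s) ds`. -/
def ysol (α : ℝ) (X0 : LagQuad) (t : ℝ) (ξ : ℝ) : ℝ :=
  X0.y ξ + ∫ s in (0:ℝ)..t, Usol α X0 s ξ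

/-- The α-dissipative solution of the Lagrangian system at time `t`. -/
def sol (α : ℝ) (X0 : LagQuad) (t : ℝ) : LagQuad :=
  ⟨ysol α X0 t, Usol α X0 t, X0.H, Vsol α X0 t⟩

/-- The Eulerian velocity `u` of `M(X)`: `u(x) = U(ξ)` whenever `x = y(ξ)`. -/
def Mu (X : LagQuad) : ℝ → ℝ := fun x => X.U (Function.invFun X.y x)

/-- The Eulerian energy measure `μ = y_#(V' dξ)` of `M(X)`. -/
def Mmu (X : LagQuad) : Measure ℝ :=
  Measure.map X.y (volume.withDensity fun ξ => ENNReal.ofReal (deriv X.V ξ))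

/-- The Eulerian past-energy measure `ν = y_#(H' dξ)` of `M(X)`. -/
def Mnu (X : LagQuad) : Measure ℝ :=
  Measure.map X.y (volume.withDensity fun ξ => ENNReal.ofReal (deriv X.H ξ))

/-- The set `D` of Eulerian coordinates `(u, μ, ν)`. -/
def inD (α : ℝ) (u : ℝ → ℝ) (μ ν : Measure ℝ) : Prop :=
  (∃ C, ∀ x, |u x| ≤ C) ∧
  (∀ x y : ℝ, u y - u x = ∫ s in x..y, deriv u s) ∧
  MemLp (deriv u) 2 volume ∧
  IsFiniteMeasure μ ∧ IsFiniteMeasure ν ∧ μ ≤ ν ∧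
  (μ.rnDeriv volume =ᵐ[volume] fun x => ENNReal.ofReal ((deriv u x) ^ 2)) ∧
  (α = 1 → μ = volume.withDensity (fun x => ENNReal.ofReal ((deriv u x) ^ 2)) ∧
    ν.rnDeriv volume =ᵐ[volume] fun x => ENNReal.ofReal ((deriv u x) ^ 2)) ∧
  (α < 1 → ∃ k : ℝ → ℝ, (∀ x, k x = 1 ∨ k x = 1 - α) ∧
    (∀ x, deriv u x < 0 → k x = 1) ∧ μ = ν.withDensity (fun x => ENNReal.ofReal (k x)))

/-- `y(ξ) = sup { x : x + ν((−∞,x)) < ξ }` — the Lagrangian characteristic of `(u,μ,ν)`. -/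
def yL (ν : Measure ℝ) (ξ : ℝ) : ℝ := sSup {x : ℝ | x + (ν (Set.Iio x)).toReal < ξ}

/-- The mapping `L : D → F₀` from Eulerian to Lagrangian coordinates. -/
def Lmap (u : ℝ → ℝ) (μ ν : Measure ℝ) : LagQuad :=
  ⟨yL ν, fun ξ => u (yL ν ξ), fun ξ => ξ - yL ν ξ,
    fun ξ => ∫ η in Set.Iio ξ,
      deriv (fun ζ => ζ - yL ν ζ) η * (μ.rnDeriv ν (yL ν η)).toReal⟩

/-- The set `D_{0,M}` of Eulerian pairs `(u, μ)` with total energy at most `M`. -/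
def inD0M (α M : ℝ) (u : ℝ → ℝ) (μ : Measure ℝ) : Prop :=
  (∃ C, ∀ x, |u x| ≤ C) ∧
  (∀ x y : ℝ, u y - u x = ∫ s in x..y, deriv u s) ∧
  MemLp (deriv u) 2 volume ∧
  IsFiniteMeasure μ ∧
  (μ.rnDeriv volume =ᵐ[volume] fun x => ENNReal.ofReal ((deriv u x) ^ 2)) ∧
  (μ Set.univ).toReal ≤ M ∧
  (α = 1 → μ = volume.withDensity (fun x => ENNReal.ofReal ((deriv u x) ^ 2)))

/-- `J_D((u₁,μ₁),(u₂,μ₂)) = inf over admissible ν₁, ν₂ of d_D((u₁,μ₁,ν₁),(u₂,μ₂,ν₂))`. -/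
def JD (α : ℝ) (u₁ : ℝ → ℝ) (μ₁ : Measure ℝ) (u₂ : ℝ → ℝ) (μ₂ : Measure ℝ) : ℝ :=
  sInf {r | ∃ ν₁ ν₂ : Measure ℝ, inD α u₁ μ₁ ν₁ ∧ inD α u₂ μ₂ ν₂ ∧
    r = dFmet α (Lmap u₁ μ₁ ν₁) (Lmap u₂ μ₂ ν₂)}

/-- The Eulerian metric `d_M` on `D_{0,M}`. -/
def dMmet (α M : ℝ) (uA : ℝ → ℝ) (μA : Measure ℝ) (uB : ℝ → ℝ) (μB : Measure ℝ) : ℝ :=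
  sInf {r | ∃ (N : ℕ) (us : ℕ → ℝ → ℝ) (μs : ℕ → Measure ℝ),
    (∀ n ≤ N, inD0M α M (us n) (μs n)) ∧
    us 0 = uA ∧ μs 0 = μA ∧ us N = uB ∧ μs N = μB ∧
    r = ∑ n ∈ Finset.range N, JD α (us (n + 1)) (μs (n + 1)) (us n) (μs n)}

end


-- ===================== auxiliary lemmas =====================

open scoped NNReal Topology

noncomputable section Aux

lemma lip_deriv_abs_le {K : ℝ≥0} {f : ℝ → ℝ} (hf : LipschitzWith K f) (x : ℝ) :
    |deriv f x| ≤ K := by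
  by_cases hx : DifferentiableAt ℝ f x
  · have h := norm_fderiv_le_of_lipschitz ℝ hf (x₀ := x)
    have e : |deriv f x| = ‖fderiv ℝ f x 1‖ := by
      rw [← toSpanSingleton_deriv (𝕜 := ℝ) (f := f) (x := x)]
      simp [Real.norm_eq_abs]
    rw [e]
    calc ‖fderiv ℝ f x 1‖ ≤ ‖fderiv ℝ f x‖ * ‖(1:ℝ)‖ := (fderiv ℝ f x).le_opNorm 1
    _ ≤ K := by simpa using h
  · rw [deriv_zero_of_not_differentiableAt hx]; simp

lemma hseq_pos (n : ℕ) : (0:ℝ) < ((n:ℝ)+1)⁻¹ := by positivity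

lemma hseq_tendsto : Tendsto (fun n : ℕ => ((n:ℝ)+1)⁻¹) atTop (𝓝 0) :=
  tendsto_one_div_add_atTop_nhds_zero_nat.congr (by intro n; rw [one_div])

lemma slope_comp_tendsto {f : ℝ → ℝ} {x d : ℝ} (hd : HasDerivAt f d x) :
    Tendsto (fun n : ℕ => (f (x + ((n:ℝ)+1)⁻¹) - f x) / ((n:ℝ)+1)⁻¹) atTop (𝓝 d) := by
  rw [hasDerivAt_iff_tendsto_slope] at hd
  have h1 : Tendsto (fun n : ℕ => x + ((n:ℝ)+1)⁻¹) atTop (𝓝[≠] x) := by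
    apply tendsto_nhdsWithin_of_tendsto_nhds_of_eventually_within
    · simpa using (tendsto_const_nhds (x := x)).add hseq_tendsto
    · exact Eventually.of_forall fun n => by
        simp only [mem_compl_iff, mem_singleton_iff]
        have := hseq_pos n; intro h; nlinarith [h]
  have := hd.comp h1
  refine this.congr fun n => ?_
  show slope f x (x + ((n:ℝ)+1)⁻¹) = _
  rw [slope_def_field, add_sub_cancel_left]

lemma lip_integral_deriv {K : ℝ≥0} {f : ℝ → ℝ} (hf : LipschitzWith K f) (a b : ℝ)
    (hab : a ≤ b) : ∫ x in Ioc a b, deriv f x = f b - f a := by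
  have hc : Continuous f := hf.continuous
  set h : ℕ → ℝ := fun n => ((n:ℝ)+1)⁻¹ with hh
  set φ : ℕ → ℝ → ℝ := fun n x => (f (x + h n) - f x) / h n with hφ
  have hφm : ∀ n, AEStronglyMeasurable (φ n) (volume.restrict (Ioc a b)) := fun n =>
    (((hc.comp (continuous_id.add continuous_const)).sub hc).div_const _).aestronglyMeasurable
  have hbd : ∀ n, ∀ᵐ x ∂volume.restrict (Ioc a b), ‖φ n x‖ ≤ (K:ℝ) := by
    intro n
    refine Eventually.of_forall fun x => ?_
    have h1 : |f (x + h n) - f x| ≤ K * |x + h n - x| := by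
      have := hf.dist_le_mul (x + h n) x
      simpa [Real.dist_eq] using this
    have hp := hseq_pos n
    rw [Real.norm_eq_abs, hφ]
    simp only
    rw [abs_div, abs_of_pos hp]
    rw [div_le_iff₀ hp]
    calc |f (x + h n) - f x| ≤ K * |x + h n - x| := h1
    _ = K * h n := by rw [add_sub_cancel_left, abs_of_pos hp]
  have hlim : ∀ᵐ x ∂volume.restrict (Ioc a b),
      Tendsto (fun n => φ n x) atTop (𝓝 (deriv f x)) := by
    refine ae_restrict_of_ae ?_
    filter_upwards [hf.ae_differentiableAt (μ := volume)] with x hx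
    exact slope_comp_tendsto hx.hasDerivAt
  have dct := tendsto_integral_of_dominated_convergence (fun _ => (K:ℝ)) hφm
    (integrable_const _) hbd hlim
  have hint : ∀ c d : ℝ, IntervalIntegrable f volume c d := fun c d => hc.intervalIntegrable c d
  have key : ∀ n, ∫ x in Ioc a b, φ n x =
      ((∫ t in b..(b + h n), f t) - ∫ t in a..(a + h n), f t) / h n := by
    intro n
    have hp := hseq_pos n
    have e1 : ∫ x in Ioc a b, φ n x = ((∫ x in a..b, f (x + h n)) - ∫ x in a..b, f x) / h n := by
      rw [← intervalIntegral.integral_of_le hab]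
      have i1 : IntervalIntegrable (fun x => f (x + h n)) volume a b := by
        apply Continuous.intervalIntegrable; continuity
      rw [← intervalIntegral.integral_sub i1 (hint a b), ← intervalIntegral.integral_div]
    have e2 : (∫ x in a..b, f (x + h n)) = ∫ x in (a + h n)..(b + h n), f x :=
      intervalIntegral.integral_comp_add_right (a := a) (b := b) f (h n)
    have e3 : (∫ x in (a + h n)..(b + h n), f x) - ∫ x in a..b, f x
        = (∫ t in b..(b + h n), f t) - ∫ t in a..(a + h n), f t := by
      have A : (∫ x in (a + h n)..b, f x) + (∫ x in b..(b + h n), f x)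
          = ∫ x in (a + h n)..(b + h n), f x :=
        intervalIntegral.integral_add_adjacent_intervals (hint _ _) (hint _ _)
      have B : (∫ x in a..(a + h n), f x) + (∫ x in (a + h n)..b, f x)
          = ∫ x in a..b, f x :=
        intervalIntegral.integral_add_adjacent_intervals (hint _ _) (hint _ _)
      linarith
    rw [e1, e2, e3]
  have hend : ∀ c : ℝ, Tendsto (fun n => (∫ t in c..(c + h n), f t) / h n) atTop (𝓝 (f c)) := by
    intro c
    have hF : HasDerivAt (fun y => ∫ t in c..y, f t) (f c) c :=
      intervalIntegral.integral_hasDerivAt_right (hint c c)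
        (hc.stronglyMeasurableAtFilter _ _) hc.continuousAt
    have := slope_comp_tendsto hF
    refine this.congr fun n => ?_
    rw [intervalIntegral.integral_same, sub_zero]
  have hlim2 : Tendsto (fun n => ∫ x in Ioc a b, φ n x) atTop (𝓝 (f b - f a)) := by
    simp_rw [key]
    have := (hend b).sub (hend a)
    refine this.congr fun n => ?_
    rw [sub_div]
  exact tendsto_nhds_unique dct hlim2

lemma lip_deriv_integrable {K : ℝ≥0} {C : ℝ} {f : ℝ → ℝ} (hf : LipschitzWith K f)
    (hb : ∀ x, |f x| ≤ C) (h0 : ∀ᵐ x ∂(volume : Measure ℝ), 0 ≤ deriv f x) :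
    Integrable (deriv f) := by
  have hm : Measurable (deriv f) := measurable_deriv f
  refine ⟨hm.aestronglyMeasurable, ?_⟩
  rw [hasFiniteIntegral_def]
  have hU : (⋃ n : ℕ, Ioc (-(n:ℝ)) n) = univ := by
    ext x
    simp only [mem_iUnion, mem_Ioc, mem_univ, iff_true]
    obtain ⟨n, hn⟩ := exists_nat_gt |x|
    exact ⟨n, (abs_lt.1 hn).1, (abs_lt.1 hn).2.le⟩
  have hdir : Directed (· ⊆ ·) fun n : ℕ => Ioc (-(n:ℝ)) n := by
    apply Monotone.directed_le
    intro m n hmn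
    apply Ioc_subset_Ioc <;> · simp; exact_mod_cast hmn
  calc ∫⁻ x, ‖deriv f x‖₊ ∂volume = ∫⁻ x in ⋃ n : ℕ, Ioc (-(n:ℝ)) n, ‖deriv f x‖₊ ∂volume := by
        rw [hU, setLIntegral_univ]
  _ = ⨆ n : ℕ, ∫⁻ x in Ioc (-(n:ℝ)) n, ‖deriv f x‖₊ ∂volume := by
        apply setLIntegral_iUnion_of_directed _ hdir
  _ ≤ ENNReal.ofReal (2 * C) := by
        refine iSup_le fun n => ?_
        have hio : IntegrableOn (deriv f) (Ioc (-(n:ℝ)) n) volume := by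
          refine Integrable.mono' (g := fun _ => (K:ℝ))
            (integrableOn_const (by simp)) hm.aestronglyMeasurable ?_
          exact Eventually.of_forall fun x => by
            rw [Real.norm_eq_abs]; exact lip_deriv_abs_le hf x
        have h0' : 0 ≤ᵐ[volume.restrict (Ioc (-(n:ℝ)) n)] deriv f := ae_restrict_of_ae h0
        have e1 : ∫⁻ x in Ioc (-(n:ℝ)) n, ‖deriv f x‖₊ ∂volume
            = ∫⁻ x in Ioc (-(n:ℝ)) n, ENNReal.ofReal (deriv f x) ∂volume := by
          refine lintegral_congr_ae ?_
          filter_upwards [h0'] with x hx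
          rw [← Real.enorm_eq_ofReal hx]; rfl
        rw [e1, ← ofReal_integral_eq_lintegral_ofReal hio h0']
        apply ENNReal.ofReal_le_ofReal
        rw [lip_integral_deriv hf _ _ (neg_le_self (Nat.cast_nonneg n))]
        cases abs_le.1 (hb (n:ℝ)); cases abs_le.1 (hb (-(n:ℝ))); linarith
  _ < ⊤ := ENNReal.ofReal_lt_top

-- ============ densities ============

/-- The density of `Vsol`. -/
def gd (α : ℝ) (X : LagQuad) (s η : ℝ) : ℝ :=
  deriv X.V η * (1 - α * (breakSet X s).indicator (fun _ => (1:ℝ)) η)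

lemma Vsol_eq (α : ℝ) (X : LagQuad) (s ξ : ℝ) :
    Vsol α X s ξ = ∫ η in Iio ξ, gd α X s η := rfl

lemma tau_measurable (X : LagQuad) : Measurable (tauOf X) := by
  unfold tauOf
  apply Measurable.ite
  · exact measurableSet_lt (measurable_deriv _) measurable_const
  · exact ENNReal.measurable_ofReal.comp
      (((measurable_deriv _).const_mul (-2)).div (measurable_deriv _))
  · apply Measurable.ite _ measurable_const measurable_const
    exact ((measurableSet_eq_fun (measurable_deriv _) measurable_const).inter
      (measurableSet_eq_fun (measurable_deriv _) measurable_const))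

lemma breakSet_measurable (X : LagQuad) (s : ℝ) : MeasurableSet (breakSet X s) := by
  unfold breakSet
  have h1 : MeasurableSet {η : ℝ | 0 < tauOf X η} :=
    measurableSet_lt measurable_const (tau_measurable X)
  have h2 : MeasurableSet {η : ℝ | tauOf X η ≤ ENNReal.ofReal s} :=
    measurableSet_le (tau_measurable X) measurable_const
  exact h1.inter h2

lemma breakSet_joint_measurable (X : LagQuad) :
    MeasurableSet {p : ℝ × ℝ | 0 < tauOf X p.2 ∧ tauOf X p.2 ≤ ENNReal.ofReal p.1} := by
  have h1 : MeasurableSet {p : ℝ × ℝ | 0 < tauOf X p.2} :=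
    measurableSet_lt measurable_const ((tau_measurable X).comp measurable_snd)
  have h2 : MeasurableSet {p : ℝ × ℝ | tauOf X p.2 ≤ ENNReal.ofReal p.1} :=
    measurableSet_le ((tau_measurable X).comp measurable_snd)
      (ENNReal.measurable_ofReal.comp measurable_fst)
  exact h1.inter h2

lemma gd_measurable (α : ℝ) (X : LagQuad) (s : ℝ) : Measurable (gd α X s) := by
  apply (measurable_deriv _).mul
  apply Measurable.sub measurable_const
  apply Measurable.const_mul
  exact Measurable.indicator measurable_const (breakSet_measurable X s)

lemma gd_joint_measurable (α : ℝ) (X : LagQuad) :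
    Measurable (fun p : ℝ × ℝ => gd α X p.1 p.2) := by
  have h1 : (fun p : ℝ × ℝ => gd α X p.1 p.2) = fun p : ℝ × ℝ =>
      deriv X.V p.2 * (1 - α * ({q : ℝ × ℝ | 0 < tauOf X q.2 ∧
        tauOf X q.2 ≤ ENNReal.ofReal q.1}).indicator (fun _ => (1:ℝ)) p) := by
    funext p
    unfold gd
    have hmem : p ∈ {q : ℝ × ℝ | 0 < tauOf X q.2 ∧ tauOf X q.2 ≤ ENNReal.ofReal q.1}
        ↔ p.2 ∈ breakSet X p.1 := Iff.rfl
    by_cases hp : p.2 ∈ breakSet X p.1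
    · rw [Set.indicator_of_mem hp, Set.indicator_of_mem (hmem.2 hp)]
    · rw [Set.indicator_of_notMem hp, Set.indicator_of_notMem (fun h => hp (hmem.1 h))]
  rw [h1]
  apply ((measurable_deriv _).comp measurable_snd).mul
  apply Measurable.sub measurable_const
  apply Measurable.const_mul
  exact Measurable.indicator measurable_const (breakSet_joint_measurable X)

lemma factor_mem {α : ℝ} (hα : α ∈ Set.Icc (0:ℝ) 1) (X : LagQuad) (s η : ℝ) :
    0 ≤ 1 - α * (breakSet X s).indicator (fun _ => (1:ℝ)) η ∧
      1 - α * (breakSet X s).indicator (fun _ => (1:ℝ)) η ≤ 1 := by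
  by_cases hp : η ∈ breakSet X s
  · rw [Set.indicator_of_mem hp]
    constructor
    · simp only [mul_one]; linarith [hα.2]
    · simp only [mul_one]; linarith [hα.1]
  · rw [Set.indicator_of_notMem hp]; simp

lemma gd_abs_le {α : ℝ} (hα : α ∈ Set.Icc (0:ℝ) 1) (X : LagQuad) (s η : ℝ) :
    |gd α X s η| ≤ |deriv X.V η| := by
  unfold gd
  rw [abs_mul]
  obtain ⟨h0, h1⟩ := factor_mem hα X s η
  calc |deriv X.V η| * |1 - α * (breakSet X s).indicator (fun _ => (1:ℝ)) η|
      ≤ |deriv X.V η| * 1 := by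
        apply mul_le_mul_of_nonneg_left _ (abs_nonneg _)
        rw [abs_of_nonneg h0]; exact h1
  _ = |deriv X.V η| := mul_one _

-- ============ integrability and Vsol properties ============

lemma derivV_nonneg {α : ℝ} {X : LagQuad} (hX : inF α X) :
    ∀ᵐ η ∂(volume : Measure ℝ), 0 ≤ deriv X.V η :=
  (hX.2.2.2.2.2.2.2.2.1).mono fun _ h => h.1

lemma derivV_integrable {α : ℝ} {X : LagQuad} (hX : inF α X) :
    Integrable (deriv X.V) := by
  obtain ⟨⟨C, hC⟩, ⟨K, hK⟩⟩ := hX.2.2.2.1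
  exact lip_deriv_integrable hK hC (derivV_nonneg hX)

lemma gd_nonneg {α : ℝ} (hα : α ∈ Set.Icc (0:ℝ) 1) {X : LagQuad} (hX : inF α X) (s : ℝ) :
    ∀ᵐ η ∂(volume : Measure ℝ), 0 ≤ gd α X s η := by
  filter_upwards [derivV_nonneg hX] with η h
  exact mul_nonneg h (factor_mem hα X s η).1

lemma gd_le_derivV {α : ℝ} (hα : α ∈ Set.Icc (0:ℝ) 1) {X : LagQuad} (hX : inF α X) (s : ℝ) :
    ∀ᵐ η ∂(volume : Measure ℝ), gd α X s η ≤ deriv X.V η := by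
  filter_upwards [derivV_nonneg hX] with η h
  calc gd α X s η ≤ deriv X.V η * 1 :=
        mul_le_mul_of_nonneg_left (factor_mem hα X s η).2 h
  _ = deriv X.V η := mul_one _

lemma gd_integrable {α : ℝ} (hα : α ∈ Set.Icc (0:ℝ) 1) {X : LagQuad} (hX : inF α X) (s : ℝ) :
    Integrable (gd α X s) := by
  refine (derivV_integrable hX).abs.mono' (gd_measurable α X s).aestronglyMeasurable ?_
  exact Eventually.of_forall fun η => by
    rw [Real.norm_eq_abs]; exact gd_abs_le hα X s η

/-- total variation bound -/
def MV (X : LagQuad) : ℝ := ∫ η, |deriv X.V η|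

lemma MV_nonneg (X : LagQuad) : 0 ≤ MV X := integral_nonneg fun _ => abs_nonneg _

lemma Vsol_abs_le {α : ℝ} (hα : α ∈ Set.Icc (0:ℝ) 1) {X : LagQuad} (hX : inF α X)
    (s ξ : ℝ) : |Vsol α X s ξ| ≤ MV X := by
  rw [Vsol_eq]
  calc |∫ η in Iio ξ, gd α X s η| ≤ ∫ η in Iio ξ, |gd α X s η| := by
        simpa [Real.norm_eq_abs] using
          norm_integral_le_integral_norm (μ := volume.restrict (Iio ξ)) (gd α X s)
  _ ≤ ∫ η in Iio ξ, |deriv X.V η| := by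
        refine integral_mono_ae ((gd_integrable hα hX s).abs.restrict)
          ((derivV_integrable hX).abs.restrict) ?_
        exact ae_restrict_of_ae (Eventually.of_forall fun η => gd_abs_le hα X s η)
  _ ≤ MV X := by
        refine setIntegral_le_integral (derivV_integrable hX).abs ?_
        exact Eventually.of_forall fun η => abs_nonneg _

lemma Vsol_tendsto {α : ℝ} (hα : α ∈ Set.Icc (0:ℝ) 1) {X : LagQuad} (hX : inF α X) (s : ℝ) :
    Tendsto (Vsol α X s) atTop (𝓝 (∫ η, gd α X s η)) := by
  have h := tendsto_setIntegral_of_monotone (μ := volume) (s := fun ξ : ℝ => Iio ξ)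
    (f := gd α X s) (fun _ => measurableSet_Iio) (fun a b hab => Iio_subset_Iio hab) ?_
  · have hU : (⋃ ξ : ℝ, Iio ξ) = univ := iUnion_Iio
    rw [hU, setIntegral_univ] at h
    exact h
  · rw [iUnion_Iio]
    exact (gd_integrable hα hX s).integrableOn
  
lemma Vsol_limUnder {α : ℝ} (hα : α ∈ Set.Icc (0:ℝ) 1) {X : LagQuad} (hX : inF α X) (s : ℝ) :
    limUnder atTop (Vsol α X s) = ∫ η, gd α X s η :=
  (Vsol_tendsto hα hX s).limUnder_eq

lemma Vsol_diff {α : ℝ} (hα : α ∈ Set.Icc (0:ℝ) 1) {X : LagQuad} (hX : inF α X)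
    {s a b : ℝ} (hab : a ≤ b) :
    Vsol α X s b - Vsol α X s a = ∫ η in Ico a b, gd α X s η := by
  have hdisj : Disjoint (Iio a) (Ico a b) := by
    apply Set.disjoint_left.mpr
    intro x hx hx'
    exact absurd hx (not_lt.2 hx'.1)
  rw [Vsol_eq, Vsol_eq, ← Iio_union_Ico_eq_Iio hab,
    setIntegral_union hdisj measurableSet_Ico
      ((gd_integrable hα hX s).integrableOn) ((gd_integrable hα hX s).integrableOn)]
  ring

lemma Vsol_monotone {α : ℝ} (hα : α ∈ Set.Icc (0:ℝ) 1) {X : LagQuad} (hX : inF α X) (s : ℝ) :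
    Monotone (Vsol α X s) := by
  intro a b hab
  have := Vsol_diff hα hX (s := s) hab
  have hnn : 0 ≤ ∫ η in Ico a b, gd α X s η := by
    refine setIntegral_nonneg_ae measurableSet_Ico ?_
    filter_upwards [gd_nonneg hα hX s] with η h _
    exact h
  linarith

lemma Vsol_lipschitz {α : ℝ} (hα : α ∈ Set.Icc (0:ℝ) 1) {X : LagQuad} (hX : inF α X)
    {K : ℝ≥0} (hK : LipschitzWith K X.V) (s : ℝ) :
    LipschitzWith K (Vsol α X s) := by
  have key : ∀ a b : ℝ, a ≤ b → |Vsol α X s b - Vsol α X s a| ≤ K * (b - a) := by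
    intro a b hab
    rw [Vsol_diff hα hX hab]
    have h := norm_setIntegral_le_of_norm_le_const (μ := volume) (s := Ico a b)
      (f := gd α X s) (C := (K:ℝ)) (by rw [Real.volume_Ico]; exact ENNReal.ofReal_lt_top)
      (fun η _ => by
        rw [Real.norm_eq_abs]
        calc |gd α X s η| ≤ |deriv X.V η| := gd_abs_le hα X s η
        _ ≤ K := lip_deriv_abs_le hK η)
    rw [Real.norm_eq_abs, Real.volume_real_Ico_of_le hab] at h
    exact h
  apply LipschitzWith.of_dist_le_mul
  intro a b
  rw [Real.dist_eq, Real.dist_eq]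
  rcases le_total a b with hab | hab
  · calc |Vsol α X s a - Vsol α X s b| = |Vsol α X s b - Vsol α X s a| := abs_sub_comm _ _
      _ ≤ K * (b - a) := key a b hab
      _ = K * |a - b| := by rw [abs_sub_comm, abs_of_nonneg (sub_nonneg.2 hab)]
  · calc |Vsol α X s a - Vsol α X s b| ≤ K * (a - b) := key b a hab
      _ = K * |a - b| := by rw [abs_of_nonneg (sub_nonneg.2 hab)]

lemma Vsol_deriv_ae {α : ℝ} (hα : α ∈ Set.Icc (0:ℝ) 1) {X : LagQuad} (hX : inF α X)
    (s : ℝ) : ∀ᵐ η ∂(volume : Measure ℝ), deriv (Vsol α X s) η = gd α X s η := by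
  obtain ⟨⟨C, hC⟩, ⟨K, hK⟩⟩ := hX.2.2.2.1
  have hlip := Vsol_lipschitz hα hX hK s
  have hmono := Vsol_monotone hα hX s
  set SF : StieltjesFunction ℝ :=
    ⟨Vsol α X s, hmono, fun x => (hlip.continuous).continuousWithinAt⟩ with hSF
  have hmeas_gd : Measurable fun η => ENNReal.ofReal (gd α X s η) :=
    ENNReal.measurable_ofReal.comp (gd_measurable α X s)
  have hμ : SF.measure = volume.withDensity (fun η => ENNReal.ofReal (gd α X s η)) := by
    refine Measure.ext_of_Ioc _ _ fun a b hab => ?_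
    rw [StieltjesFunction.measure_Ioc, withDensity_apply _ measurableSet_Ioc]
    have h1 : SF b - SF a = ∫ η in Ico a b, gd α X s η := Vsol_diff hα hX hab.le
    have h2 : ∫ η in Ico a b, gd α X s η = ∫ η in Ioc a b, gd α X s η := by
      rw [integral_Ico_eq_integral_Ioo, integral_Ioc_eq_integral_Ioo]
    rw [h1, h2, ← ofReal_integral_eq_lintegral_ofReal ((gd_integrable hα hX s).integrableOn)
      (ae_restrict_of_ae (gd_nonneg hα hX s))]
  have hrn : SF.measure.rnDeriv volume =ᵐ[volume] fun η => ENNReal.ofReal (gd α X s η) := by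
    rw [hμ]
    exact Measure.rnDeriv_withDensity volume hmeas_gd
  filter_upwards [SF.ae_hasDerivAt, hrn, gd_nonneg hα hX s] with η h1 h2 h3
  have : HasDerivAt (Vsol α X s) ((SF.measure.rnDeriv volume η).toReal) η := h1
  rw [this.deriv, h2, ENNReal.toReal_ofReal h3]

-- ============ Usol properties ============

/-- integrand of the time integral in `Usol` -/
def qf (α : ℝ) (X : LagQuad) (s ξ : ℝ) : ℝ :=
  (1 / 2) * Vsol α X s ξ - (1 / 4) * limUnder Filter.atTop (Vsol α X s)

lemma Usol_eq (α : ℝ) (X : LagQuad) (t ξ : ℝ) :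
    Usol α X t ξ = X.U ξ + ∫ s in (0:ℝ)..t, qf α X s ξ := rfl

lemma intgd_abs_le {α : ℝ} (hα : α ∈ Set.Icc (0:ℝ) 1) {X : LagQuad} (hX : inF α X)
    (s : ℝ) : |∫ η, gd α X s η| ≤ MV X := by
  calc |∫ η, gd α X s η| ≤ ∫ η, |gd α X s η| := by
        simpa [Real.norm_eq_abs] using norm_integral_le_integral_norm (μ := volume) (gd α X s)
  _ ≤ MV X := by
        refine integral_mono_ae ((gd_integrable hα hX s).abs) ((derivV_integrable hX).abs) ?_
        exact Eventually.of_forall fun η => gd_abs_le hα X s η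

lemma qf_abs_le {α : ℝ} (hα : α ∈ Set.Icc (0:ℝ) 1) {X : LagQuad} (hX : inF α X)
    (s ξ : ℝ) : |qf α X s ξ| ≤ (3/4) * MV X := by
  unfold qf
  rw [Vsol_limUnder hα hX s]
  have h1 := Vsol_abs_le hα hX s ξ
  have h2 := intgd_abs_le hα hX s
  calc |(1/2) * Vsol α X s ξ - (1/4) * ∫ η, gd α X s η|
      ≤ |(1/2) * Vsol α X s ξ| + |(1/4) * ∫ η, gd α X s η| := abs_sub _ _
  _ = (1/2) * |Vsol α X s ξ| + (1/4) * |∫ η, gd α X s η| := by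
        rw [abs_mul, abs_mul, abs_of_nonneg (by norm_num : (0:ℝ) ≤ 1/2),
          abs_of_nonneg (by norm_num : (0:ℝ) ≤ 1/4)]
  _ ≤ (3/4) * MV X := by linarith

lemma Vsol_meas_s (α : ℝ) (X : LagQuad) (ξ : ℝ) :
    StronglyMeasurable (fun s => Vsol α X s ξ) := by
  have := (gd_joint_measurable α X).stronglyMeasurable.integral_prod_right'
    (ν := volume.restrict (Iio ξ))
  exact this

lemma intgd_meas_s (α : ℝ) (X : LagQuad) :
    StronglyMeasurable (fun s => ∫ η, gd α X s η) := by
  have := (gd_joint_measurable α X).stronglyMeasurable.integral_prod_right'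
    (ν := (volume : Measure ℝ))
  exact this

lemma qf_meas_s {α : ℝ} (hα : α ∈ Set.Icc (0:ℝ) 1) {X : LagQuad} (hX : inF α X) (ξ : ℝ) :
    StronglyMeasurable (fun s => qf α X s ξ) := by
  have he : (fun s => qf α X s ξ)
      = fun s => (1/2) * Vsol α X s ξ - (1/4) * ∫ η, gd α X s η := by
    funext s
    unfold qf
    rw [Vsol_limUnder hα hX s]
  rw [he]
  exact ((Vsol_meas_s α X ξ).const_mul _).sub ((intgd_meas_s α X).const_mul _)

lemma qf_intervalIntegrable {α : ℝ} (hα : α ∈ Set.Icc (0:ℝ) 1) {X : LagQuad}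
    (hX : inF α X) (ξ a b : ℝ) :
    IntervalIntegrable (fun s => qf α X s ξ) volume a b := by
  rw [intervalIntegrable_iff]
  refine Integrable.mono' (g := fun _ => (3/4) * MV X) ?_
    (qf_meas_s hα hX ξ).aestronglyMeasurable ?_
  · exact integrableOn_const measure_Ioc_lt_top.ne
  · exact Eventually.of_forall fun s => by
      rw [Real.norm_eq_abs]; exact qf_abs_le hα hX s ξ

lemma Usol_sub_s {α : ℝ} (hα : α ∈ Set.Icc (0:ℝ) 1) {X : LagQuad} (hX : inF α X)
    (s s' ξ : ℝ) : |Usol α X s ξ - Usol α X s' ξ| ≤ (3/4) * MV X * |s - s'| := by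
  rw [Usol_eq, Usol_eq]
  have he : X.U ξ + (∫ r in (0:ℝ)..s, qf α X r ξ)
      - (X.U ξ + ∫ r in (0:ℝ)..s', qf α X r ξ)
      = (∫ r in (0:ℝ)..s, qf α X r ξ) - ∫ r in (0:ℝ)..s', qf α X r ξ := by ring
  rw [he, intervalIntegral.integral_interval_sub_left (qf_intervalIntegrable hα hX ξ 0 s)
    (qf_intervalIntegrable hα hX ξ 0 s')]
  have := intervalIntegral.norm_integral_le_of_norm_le_const (a := s') (b := s)
    (C := (3/4) * MV X) (f := fun r => qf α X r ξ) (fun r _ => by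
      rw [Real.norm_eq_abs]; exact qf_abs_le hα hX r ξ)
  rw [Real.norm_eq_abs] at this
  calc |∫ r in s'..s, qf α X r ξ| ≤ (3/4) * MV X * |s - s'| := this
  _ = (3/4) * MV X * |s - s'| := rfl

lemma Usol_sub_xi {α : ℝ} (hα : α ∈ Set.Icc (0:ℝ) 1) {X : LagQuad} (hX : inF α X)
    {KU KV : ℝ≥0} (hKU : LipschitzWith KU X.U) (hKV : LipschitzWith KV X.V)
    (s ξ ξ' : ℝ) :
    |Usol α X s ξ - Usol α X s ξ'| ≤ KU * |ξ - ξ'| + |s| * ((KV : ℝ)/2 * |ξ - ξ'|) := by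
  rw [Usol_eq, Usol_eq]
  have he : X.U ξ + (∫ r in (0:ℝ)..s, qf α X r ξ)
      - (X.U ξ' + ∫ r in (0:ℝ)..s, qf α X r ξ')
      = (X.U ξ - X.U ξ') + ((∫ r in (0:ℝ)..s, qf α X r ξ)
        - ∫ r in (0:ℝ)..s, qf α X r ξ') := by ring
  rw [he]
  have h1 : |X.U ξ - X.U ξ'| ≤ KU * |ξ - ξ'| := by
    have := hKU.dist_le_mul ξ ξ'
    simpa [Real.dist_eq] using this
  have h2 : |(∫ r in (0:ℝ)..s, qf α X r ξ) - ∫ r in (0:ℝ)..s, qf α X r ξ'|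
      ≤ (KV : ℝ)/2 * |ξ - ξ'| * |s - 0| := by
    rw [← intervalIntegral.integral_sub (qf_intervalIntegrable hα hX ξ 0 s)
      (qf_intervalIntegrable hα hX ξ' 0 s)]
    have := intervalIntegral.norm_integral_le_of_norm_le_const (a := (0:ℝ)) (b := s)
      (C := (KV : ℝ)/2 * |ξ - ξ'|) (f := fun r => qf α X r ξ - qf α X r ξ') (fun r _ => by
        rw [Real.norm_eq_abs]
        show |qf α X r ξ - qf α X r ξ'| ≤ _
        unfold qf
        have hv := (Vsol_lipschitz hα hX hKV r).dist_le_mul ξ ξ'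
        rw [Real.dist_eq, Real.dist_eq] at hv
        have he2 : (1/2) * Vsol α X r ξ - (1/4) * limUnder Filter.atTop (Vsol α X r)
            - ((1/2) * Vsol α X r ξ' - (1/4) * limUnder Filter.atTop (Vsol α X r))
            = (1/2) * (Vsol α X r ξ - Vsol α X r ξ') := by ring
        rw [he2, abs_mul]
        have : |(1:ℝ)/2| = 1/2 := by norm_num
        rw [this]
        linarith)
    rw [Real.norm_eq_abs] at this
    exact this
  rw [sub_zero] at h2
  have habs : |s| * ((KV : ℝ)/2 * |ξ - ξ'|) = (KV : ℝ)/2 * |ξ - ξ'| * |s| := by ring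
  calc |(X.U ξ - X.U ξ') + ((∫ r in (0:ℝ)..s, qf α X r ξ) - ∫ r in (0:ℝ)..s, qf α X r ξ')|
      ≤ |X.U ξ - X.U ξ'| + |(∫ r in (0:ℝ)..s, qf α X r ξ) - ∫ r in (0:ℝ)..s, qf α X r ξ'| :=
        abs_add_le _ _
  _ ≤ KU * |ξ - ξ'| + |s| * ((KV : ℝ)/2 * |ξ - ξ'|) := by rw [habs]; linarith

lemma Usol_continuous {α : ℝ} (hα : α ∈ Set.Icc (0:ℝ) 1) {X : LagQuad} (hX : inF α X) :
    Continuous (Function.uncurry fun s ξ => Usol α X s ξ) := by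
  obtain ⟨-, ⟨KU, hKU⟩⟩ := hX.2.1
  obtain ⟨-, ⟨KV, hKV⟩⟩ := hX.2.2.2.1
  rw [continuous_iff_continuousAt]
  intro p₀
  set F := Function.uncurry fun s ξ => Usol α X s ξ with hF
  have hFdef : ∀ p : ℝ × ℝ, F p = Usol α X p.1 p.2 := fun p => rfl
  have hbd : ∀ p : ℝ × ℝ, |F p - F p₀| ≤
      (3/4) * MV X * |p.1 - p₀.1| + (KU * |p.2 - p₀.2|
        + |p₀.1| * ((KV : ℝ)/2 * |p.2 - p₀.2|)) := by
    intro p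
    have t1 := Usol_sub_s hα hX p.1 p₀.1 p.2
    have t2 := Usol_sub_xi hα hX hKU hKV p₀.1 p.2 p₀.2
    have tri : |F p - F p₀| ≤ |Usol α X p.1 p.2 - Usol α X p₀.1 p.2|
        + |Usol α X p₀.1 p.2 - Usol α X p₀.1 p₀.2| := by
      rw [hFdef p, hFdef p₀]
      have he3 : Usol α X p.1 p.2 - Usol α X p₀.1 p₀.2
          = (Usol α X p.1 p.2 - Usol α X p₀.1 p.2)
            + (Usol α X p₀.1 p.2 - Usol α X p₀.1 p₀.2) := by ring
      rw [he3]; exact abs_add_le _ _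
    linarith
  have h0 : Tendsto (fun p : ℝ × ℝ => (3/4) * MV X * |p.1 - p₀.1| + ((KU : ℝ) * |p.2 - p₀.2|
      + |p₀.1| * ((KV:ℝ)/2 * |p.2 - p₀.2|))) (𝓝 p₀) (𝓝 0) := by
    have hc : Continuous fun p : ℝ × ℝ => (3/4) * MV X * |p.1 - p₀.1| + ((KU : ℝ) * |p.2 - p₀.2|
        + |p₀.1| * ((KV:ℝ)/2 * |p.2 - p₀.2|)) := by continuity
    have h := hc.continuousAt (x := p₀)
    unfold ContinuousAt at h
    simpa using h
  have hsq : Tendsto (fun p => |F p - F p₀|) (𝓝 p₀) (𝓝 0) :=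
    squeeze_zero (fun p => abs_nonneg _) hbd h0
  rw [ContinuousAt, tendsto_iff_dist_tendsto_zero]
  simpa [Real.dist_eq] using hsq

lemma derivUsol_joint_meas {α : ℝ} (hα : α ∈ Set.Icc (0:ℝ) 1) {X : LagQuad}
    (hX : inF α X) : Measurable fun p : ℝ × ℝ => deriv (Usol α X p.1) p.2 :=
  measurable_deriv_with_param (Usol_continuous hα hX)

-- ============ two-solution quantities ============

/-- the set `Ω₁₂(s)` for the `α`-dissipative solutions -/
def OmJ (α : ℝ) (X₁ X₂ : LagQuad) (s : ℝ) : Set ℝ :=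
  OmegaT (tauOf X₁) (tauOf X₂) s (sol α X₁ s) (sol α X₂ s)

/-- an a.e.-representative of `G₁₂(s)` built from the densities -/
def Gp (α : ℝ) (X₁ X₂ : LagQuad) (s η : ℝ) : ℝ :=
  if η ∈ OmJ α X₁ X₂ s then |gd α X₁ s η - gd α X₂ s η|
  else max (gd α X₁ s η) (gd α X₂ s η)

lemma OmJ_eq (α : ℝ) (X₁ X₂ : LagQuad) (s : ℝ) :
    OmJ α X₁ X₂ s = ({ξ | 0 ≤ deriv (Usol α X₁ s) ξ} ∩ {ξ | 0 ≤ deriv (Usol α X₂ s) ξ})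
      ∪ ({ξ | ENNReal.ofReal s < tauOf X₁ ξ} ∩ ({ξ | tauOf X₁ ξ = tauOf X₂ ξ}
        ∩ {ξ | tauOf X₂ ξ < ⊤})) := by
  ext ξ
  constructor
  · rintro (⟨h1, h2⟩ | ⟨h1, h2, h3⟩)
    · exact Or.inl ⟨h1, h2⟩
    · exact Or.inr ⟨h1, h2, h3⟩
  · rintro (⟨h1, h2⟩ | ⟨h1, h2, h3⟩)
    · exact Or.inl ⟨h1, h2⟩
    · exact Or.inr ⟨h1, h2, h3⟩

lemma OmJ_measurable (α : ℝ) (X₁ X₂ : LagQuad) (s : ℝ) :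
    MeasurableSet (OmJ α X₁ X₂ s) := by
  rw [OmJ_eq]
  have a1 : MeasurableSet {ξ : ℝ | 0 ≤ deriv (Usol α X₁ s) ξ} :=
    measurableSet_le measurable_const (measurable_deriv _)
  have a2 : MeasurableSet {ξ : ℝ | 0 ≤ deriv (Usol α X₂ s) ξ} :=
    measurableSet_le measurable_const (measurable_deriv _)
  have b1 : MeasurableSet {ξ : ℝ | ENNReal.ofReal s < tauOf X₁ ξ} :=
    measurableSet_lt measurable_const (tau_measurable X₁)
  have b2 : MeasurableSet {ξ : ℝ | tauOf X₁ ξ = tauOf X₂ ξ} := by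
    have c1 : MeasurableSet {ξ : ℝ | tauOf X₁ ξ ≤ tauOf X₂ ξ} :=
      measurableSet_le (tau_measurable X₁) (tau_measurable X₂)
    have c2 : MeasurableSet {ξ : ℝ | tauOf X₂ ξ ≤ tauOf X₁ ξ} :=
      measurableSet_le (tau_measurable X₂) (tau_measurable X₁)
    have : {ξ : ℝ | tauOf X₁ ξ = tauOf X₂ ξ}
        = {ξ : ℝ | tauOf X₁ ξ ≤ tauOf X₂ ξ} ∩ {ξ : ℝ | tauOf X₂ ξ ≤ tauOf X₁ ξ} := by
      ext ξ; exact ⟨fun h => ⟨h.le, h.ge⟩, fun h => le_antisymm h.1 h.2⟩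
    rw [this]; exact c1.inter c2
  have b3 : MeasurableSet {ξ : ℝ | tauOf X₂ ξ < ⊤} :=
    measurableSet_lt (tau_measurable X₂) measurable_const
  exact (a1.inter a2).union (b1.inter (b2.inter b3))

lemma OmJ_joint_measurable {α : ℝ} (hα : α ∈ Set.Icc (0:ℝ) 1) {X₁ X₂ : LagQuad}
    (h₁ : inF α X₁) (h₂ : inF α X₂) :
    MeasurableSet {p : ℝ × ℝ | p.2 ∈ OmJ α X₁ X₂ p.1} := by
  have he : {p : ℝ × ℝ | p.2 ∈ OmJ α X₁ X₂ p.1}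
      = ({p : ℝ × ℝ | 0 ≤ deriv (Usol α X₁ p.1) p.2}
          ∩ {p : ℝ × ℝ | 0 ≤ deriv (Usol α X₂ p.1) p.2})
        ∪ ({p : ℝ × ℝ | ENNReal.ofReal p.1 < tauOf X₁ p.2}
          ∩ ({p : ℝ × ℝ | tauOf X₁ p.2 = tauOf X₂ p.2}
            ∩ {p : ℝ × ℝ | tauOf X₂ p.2 < ⊤})) := by
    ext p
    constructor
    · intro hp
      have hp' : p.2 ∈ OmJ α X₁ X₂ p.1 := hp
      rw [OmJ_eq] at hp'
      rcases hp' with ⟨h1, h2⟩ | ⟨h1, h2, h3⟩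
      · exact Or.inl ⟨h1, h2⟩
      · exact Or.inr ⟨h1, h2, h3⟩
    · intro hp
      show p.2 ∈ OmJ α X₁ X₂ p.1
      rw [OmJ_eq]
      rcases hp with ⟨h1, h2⟩ | ⟨h1, h2, h3⟩
      · exact Or.inl ⟨h1, h2⟩
      · exact Or.inr ⟨h1, h2, h3⟩
  rw [he]
  have a1 : MeasurableSet {p : ℝ × ℝ | 0 ≤ deriv (Usol α X₁ p.1) p.2} :=
    measurableSet_le measurable_const (derivUsol_joint_meas hα h₁)
  have a2 : MeasurableSet {p : ℝ × ℝ | 0 ≤ deriv (Usol α X₂ p.1) p.2} :=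
    measurableSet_le measurable_const (derivUsol_joint_meas hα h₂)
  have b1 : MeasurableSet {p : ℝ × ℝ | ENNReal.ofReal p.1 < tauOf X₁ p.2} :=
    measurableSet_lt (ENNReal.measurable_ofReal.comp measurable_fst)
      ((tau_measurable X₁).comp measurable_snd)
  have b2 : MeasurableSet {p : ℝ × ℝ | tauOf X₁ p.2 = tauOf X₂ p.2} := by
    have c1 : MeasurableSet {p : ℝ × ℝ | tauOf X₁ p.2 ≤ tauOf X₂ p.2} :=
      measurableSet_le ((tau_measurable X₁).comp measurable_snd)
        ((tau_measurable X₂).comp measurable_snd)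
    have c2 : MeasurableSet {p : ℝ × ℝ | tauOf X₂ p.2 ≤ tauOf X₁ p.2} :=
      measurableSet_le ((tau_measurable X₂).comp measurable_snd)
        ((tau_measurable X₁).comp measurable_snd)
    have : {p : ℝ × ℝ | tauOf X₁ p.2 = tauOf X₂ p.2}
        = {p : ℝ × ℝ | tauOf X₁ p.2 ≤ tauOf X₂ p.2}
          ∩ {p : ℝ × ℝ | tauOf X₂ p.2 ≤ tauOf X₁ p.2} := by
      ext p; exact ⟨fun h => ⟨h.le, h.ge⟩, fun h => le_antisymm h.1 h.2⟩
    rw [this]; exact c1.inter c2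
  have b3 : MeasurableSet {p : ℝ × ℝ | tauOf X₂ p.2 < ⊤} :=
    measurableSet_lt ((tau_measurable X₂).comp measurable_snd) measurable_const
  exact (a1.inter a2).union (b1.inter (b2.inter b3))

lemma Gp_measurable (α : ℝ) (X₁ X₂ : LagQuad) (s : ℝ) :
    Measurable (Gp α X₁ X₂ s) := by
  unfold Gp
  exact Measurable.ite (OmJ_measurable α X₁ X₂ s)
    (((gd_measurable α X₁ s).sub (gd_measurable α X₂ s)).abs)
    ((gd_measurable α X₁ s).max (gd_measurable α X₂ s))

lemma Gp_joint_measurable {α : ℝ} (hα : α ∈ Set.Icc (0:ℝ) 1) {X₁ X₂ : LagQuad}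
    (h₁ : inF α X₁) (h₂ : inF α X₂) :
    Measurable (fun p : ℝ × ℝ => Gp α X₁ X₂ p.1 p.2) := by
  unfold Gp
  exact Measurable.ite (OmJ_joint_measurable hα h₁ h₂)
    ((((gd_joint_measurable α X₁).sub (gd_joint_measurable α X₂)).abs))
    ((gd_joint_measurable α X₁).max (gd_joint_measurable α X₂))

lemma Gp_abs_le {α : ℝ} (hα : α ∈ Set.Icc (0:ℝ) 1) (X₁ X₂ : LagQuad) (s η : ℝ) :
    |Gp α X₁ X₂ s η| ≤ |deriv X₁.V η| + |deriv X₂.V η| := by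
  have h1 := gd_abs_le hα X₁ s η
  have h2 := gd_abs_le hα X₂ s η
  unfold Gp
  split_ifs with h
  · calc |(|gd α X₁ s η - gd α X₂ s η|)| = |gd α X₁ s η - gd α X₂ s η| := abs_abs _
    _ ≤ |gd α X₁ s η| + |gd α X₂ s η| := abs_sub _ _
    _ ≤ _ := by linarith
  · rcases le_total (gd α X₁ s η) (gd α X₂ s η) with hle | hle
    · rw [max_eq_right hle]
      calc |gd α X₂ s η| ≤ |deriv X₂.V η| := h2
      _ ≤ _ := by linarith [abs_nonneg (deriv X₁.V η)]
    · rw [max_eq_left hle]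
      calc |gd α X₁ s η| ≤ |deriv X₁.V η| := h1
      _ ≤ _ := by linarith [abs_nonneg (deriv X₂.V η)]

lemma Gp_integrable {α : ℝ} (hα : α ∈ Set.Icc (0:ℝ) 1) {X₁ X₂ : LagQuad}
    (h₁ : inF α X₁) (h₂ : inF α X₂) (s : ℝ) :
    Integrable (Gp α X₁ X₂ s) := by
  refine ((derivV_integrable h₁).abs.add (derivV_integrable h₂).abs).mono'
    (Gp_measurable α X₁ X₂ s).aestronglyMeasurable ?_
  exact Eventually.of_forall fun η => by
    rw [Real.norm_eq_abs]; exact Gp_abs_le hα X₁ X₂ s η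

lemma Gp_nonneg {α : ℝ} (hα : α ∈ Set.Icc (0:ℝ) 1) {X₁ X₂ : LagQuad}
    (h₁ : inF α X₁) (h₂ : inF α X₂) (s : ℝ) :
    ∀ᵐ η ∂(volume : Measure ℝ), 0 ≤ Gp α X₁ X₂ s η := by
  filter_upwards [gd_nonneg hα h₁ s, gd_nonneg hα h₂ s] with η e1 e2
  unfold Gp
  split_ifs with h
  · exact abs_nonneg _
  · exact le_max_of_le_left e1

lemma w_le_Gp {α : ℝ} (hα : α ∈ Set.Icc (0:ℝ) 1) {X₁ X₂ : LagQuad}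
    (h₁ : inF α X₁) (h₂ : inF α X₂) (s : ℝ) :
    ∀ᵐ η ∂(volume : Measure ℝ),
      |gd α X₁ s η - gd α X₂ s η| ≤ Gp α X₁ X₂ s η := by
  filter_upwards [gd_nonneg hα h₁ s, gd_nonneg hα h₂ s] with η e1 e2
  unfold Gp
  split_ifs with h
  · exact le_refl _
  · rcases le_total (gd α X₁ s η) (gd α X₂ s η) with hle | hle
    · rw [abs_of_nonpos (by linarith), max_eq_right hle]; linarith
    · rw [abs_of_nonneg (by linarith), max_eq_left hle]; linarith

lemma GfunT_ae {α : ℝ} (hα : α ∈ Set.Icc (0:ℝ) 1) {X₁ X₂ : LagQuad}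
    (h₁ : inF α X₁) (h₂ : inF α X₂) (s : ℝ) :
    GfunT (tauOf X₁) (tauOf X₂) s (sol α X₁ s) (sol α X₂ s)
      =ᵐ[volume] Gp α X₁ X₂ s := by
  filter_upwards [Vsol_deriv_ae hα h₁ s, Vsol_deriv_ae hα h₂ s] with η e1 e2
  have hv1 : (sol α X₁ s).V = Vsol α X₁ s := rfl
  have hv2 : (sol α X₂ s).V = Vsol α X₂ s := rfl
  have hΩ : OmegaT (tauOf X₁) (tauOf X₂) s (sol α X₁ s) (sol α X₂ s) = OmJ α X₁ X₂ s := rfl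
  unfold GfunT
  rw [hΩ]
  by_cases h : η ∈ OmJ α X₁ X₂ s
  · rw [Set.indicator_of_mem h, Set.indicator_of_notMem (by simpa using h)]
    rw [hv1, hv2, e1, e2, add_zero]
    unfold Gp
    rw [if_pos h]
  · rw [Set.indicator_of_notMem h, Set.indicator_of_mem (by simpa using h)]
    rw [hv1, hv2, e1, e2, zero_add]
    unfold Gp
    rw [if_neg h]

lemma nrm1_eq {α : ℝ} (hα : α ∈ Set.Icc (0:ℝ) 1) {X₁ X₂ : LagQuad}
    (h₁ : inF α X₁) (h₂ : inF α X₂) (s : ℝ) :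
    nrm 1 (GfunT (tauOf X₁) (tauOf X₂) s (sol α X₁ s) (sol α X₂ s))
      = ∫ η, Gp α X₁ X₂ s η := by
  unfold nrm
  rw [eLpNorm_congr_ae (GfunT_ae hα h₁ h₂ s)]
  rw [eLpNorm_one_eq_lintegral_enorm]
  rw [← integral_norm_eq_lintegral_enorm (Gp_measurable α X₁ X₂ s).aestronglyMeasurable]
  refine integral_congr_ae ?_
  filter_upwards [Gp_nonneg hα h₁ h₂ s] with η hη
  rw [Real.norm_eq_abs, abs_of_nonneg hη]

lemma central {α : ℝ} (hα : α ∈ Set.Icc (0:ℝ) 1) {X₁ X₂ : LagQuad}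
    (h₁ : inF α X₁) (h₂ : inF α X₂) (s ξ : ℝ) :
    |qf α X₁ s ξ - qf α X₂ s ξ| ≤ (1/4) * ∫ η, Gp α X₁ X₂ s η := by
  set w : ℝ → ℝ := fun η => gd α X₁ s η - gd α X₂ s η with hw
  have hwint : Integrable w := (gd_integrable hα h₁ s).sub (gd_integrable hα h₂ s)
  have hsplit : (∫ η in Iio ξ, w η) + ∫ η in Ici ξ, w η = ∫ η, w η := by
    have := integral_add_compl (measurableSet_Iio (a := ξ)) hwint
    rwa [compl_Iio] at this
  have hA : ∫ η in Iio ξ, w η = Vsol α X₁ s ξ - Vsol α X₂ s ξ := by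
    rw [Vsol_eq, Vsol_eq]
    exact integral_sub ((gd_integrable hα h₁ s).integrableOn)
      ((gd_integrable hα h₂ s).integrableOn)
  have hT : ∫ η, w η = (∫ η, gd α X₁ s η) - ∫ η, gd α X₂ s η :=
    integral_sub (gd_integrable hα h₁ s) (gd_integrable hα h₂ s)
  have hq : qf α X₁ s ξ - qf α X₂ s ξ
      = (1/4) * (∫ η in Iio ξ, w η) - (1/4) * ∫ η in Ici ξ, w η := by
    unfold qf
    rw [Vsol_limUnder hα h₁ s, Vsol_limUnder hα h₂ s]
    have e : (∫ η, gd α X₁ s η) - (∫ η, gd α X₂ s η) = ∫ η, w η := hT.symm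
    have e2 : Vsol α X₁ s ξ - Vsol α X₂ s ξ = ∫ η in Iio ξ, w η := hA.symm
    nlinarith [hsplit, e, e2]
  have habs1 : |∫ η in Iio ξ, w η| ≤ ∫ η in Iio ξ, |w η| := by
    simpa [Real.norm_eq_abs] using
      norm_integral_le_integral_norm (μ := volume.restrict (Iio ξ)) w
  have habs2 : |∫ η in Ici ξ, w η| ≤ ∫ η in Ici ξ, |w η| := by
    simpa [Real.norm_eq_abs] using
      norm_integral_le_integral_norm (μ := volume.restrict (Ici ξ)) w
  have hsplit2 : (∫ η in Iio ξ, |w η|) + ∫ η in Ici ξ, |w η| = ∫ η, |w η| := by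
    have := integral_add_compl (measurableSet_Iio (a := ξ)) hwint.abs
    rwa [compl_Iio] at this
  have hfin : ∫ η, |w η| ≤ ∫ η, Gp α X₁ X₂ s η := by
    refine integral_mono_ae hwint.abs (Gp_integrable hα h₁ h₂ s) ?_
    exact w_le_Gp hα h₁ h₂ s
  rw [hq]
  have c1 : |(1/4 : ℝ) * (∫ η in Iio ξ, w η) - (1/4) * ∫ η in Ici ξ, w η|
      ≤ (1/4) * |∫ η in Iio ξ, w η| + (1/4) * |∫ η in Ici ξ, w η| := by
    calc |(1/4 : ℝ) * (∫ η in Iio ξ, w η) - (1/4) * ∫ η in Ici ξ, w η|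
        ≤ |(1/4 : ℝ) * ∫ η in Iio ξ, w η| + |(1/4 : ℝ) * ∫ η in Ici ξ, w η| := abs_sub _ _
    _ = (1/4) * |∫ η in Iio ξ, w η| + (1/4) * |∫ η in Ici ξ, w η| := by
        rw [abs_mul, abs_mul, abs_of_nonneg (by norm_num : (0:ℝ) ≤ 1/4)]
  linarith

lemma intGp_meas {α : ℝ} (hα : α ∈ Set.Icc (0:ℝ) 1) {X₁ X₂ : LagQuad}
    (h₁ : inF α X₁) (h₂ : inF α X₂) :
    StronglyMeasurable (fun s => ∫ η, Gp α X₁ X₂ s η) := by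
  have := (Gp_joint_measurable hα h₁ h₂).stronglyMeasurable.integral_prod_right'
    (ν := (volume : Measure ℝ))
  exact this

lemma intGp_bound {α : ℝ} (hα : α ∈ Set.Icc (0:ℝ) 1) {X₁ X₂ : LagQuad}
    (h₁ : inF α X₁) (h₂ : inF α X₂) (s : ℝ) :
    |∫ η, Gp α X₁ X₂ s η| ≤ MV X₁ + MV X₂ := by
  calc |∫ η, Gp α X₁ X₂ s η| ≤ ∫ η, |Gp α X₁ X₂ s η| := by
        simpa [Real.norm_eq_abs] using
          norm_integral_le_integral_norm (μ := volume) (Gp α X₁ X₂ s)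
  _ ≤ ∫ η, (|deriv X₁.V η| + |deriv X₂.V η|) := by
        refine integral_mono_ae (Gp_integrable hα h₁ h₂ s).abs
          ((derivV_integrable h₁).abs.add (derivV_integrable h₂).abs) ?_
        exact Eventually.of_forall fun η => Gp_abs_le hα X₁ X₂ s η
  _ = MV X₁ + MV X₂ :=
        integral_add (derivV_integrable h₁).abs (derivV_integrable h₂).abs

end Aux

/-- `‖U₁(·,t) − U₂(·,t)‖_{L∞} ≤ ‖U₁(·,0) − U₂(·,0)‖_{L∞}
+ (1/4)·∫₀ᵗ ‖G₁₂(·,s)‖_{L¹} ds` for α-dissipative solutions with data in `F`. -/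
theorem statement5 (α : ℝ) (hα : α ∈ Set.Icc (0 : ℝ) 1)
    (X₁ X₂ : LagQuad) (h₁ : inF α X₁) (h₂ : inF α X₂)
    (t : ℝ) (ht : 0 ≤ t) :
    nrm ⊤ (fun ξ => Usol α X₁ t ξ - Usol α X₂ t ξ) ≤
      nrm ⊤ (fun ξ => Usol α X₁ 0 ξ - Usol α X₂ 0 ξ)
        + (1 / 4) * ∫ s in (0:ℝ)..t,
            nrm 1 (GfunT (tauOf X₁) (tauOf X₂) s (sol α X₁ s) (sol α X₂ s)) := by
  have hGn_eq : ∀ s : ℝ, nrm 1 (GfunT (tauOf X₁) (tauOf X₂) s (sol α X₁ s) (sol α X₂ s))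
      = ∫ η, Gp α X₁ X₂ s η := fun s => nrm1_eq hα h₁ h₂ s
  have hU0 : (fun ξ => Usol α X₁ 0 ξ - Usol α X₂ 0 ξ) = fun ξ => X₁.U ξ - X₂.U ξ := by
    funext ξ
    rw [Usol_eq, Usol_eq, intervalIntegral.integral_same, intervalIntegral.integral_same]
    ring
  set Gn : ℝ → ℝ := fun s =>
    nrm 1 (GfunT (tauOf X₁) (tauOf X₂) s (sol α X₁ s) (sol α X₂ s)) with hGn
  set N := nrm ⊤ (fun ξ => Usol α X₁ 0 ξ - Usol α X₂ 0 ξ) with hN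
  set R : ℝ := ∫ s in (0:ℝ)..t, (1/4) * Gn s with hR
  have hGnii : IntervalIntegrable (fun s => (1/4) * Gn s) volume 0 t := by
    have he : (fun s => (1/4) * Gn s) = fun s => (1/4) * ∫ η, Gp α X₁ X₂ s η := by
      funext s; simp only [hGn]; rw [hGn_eq s]
    rw [he, intervalIntegrable_iff]
    refine Integrable.mono' (g := fun _ => (1/4) * (MV X₁ + MV X₂))
      (integrableOn_const measure_Ioc_lt_top.ne)
      (((intGp_meas hα h₁ h₂).const_mul _).aestronglyMeasurable.restrict) ?_
    refine Eventually.of_forall fun s => ?_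
    rw [Real.norm_eq_abs, abs_mul, abs_of_nonneg (by norm_num : (0:ℝ) ≤ 1/4)]
    have hb := intGp_bound hα h₁ h₂ s
    linarith
  have hRnn : 0 ≤ R := by
    rw [hR]
    apply intervalIntegral.integral_nonneg ht
    intro s _
    have hg : 0 ≤ Gn s := by rw [hGn]; exact ENNReal.toReal_nonneg
    linarith
  have hid : ∀ ξ, Usol α X₁ t ξ - Usol α X₂ t ξ
      = (X₁.U ξ - X₂.U ξ) + ∫ s in (0:ℝ)..t, (qf α X₁ s ξ - qf α X₂ s ξ) := by
    intro ξ
    rw [Usol_eq, Usol_eq, intervalIntegral.integral_sub (qf_intervalIntegrable hα h₁ ξ 0 t)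
      (qf_intervalIntegrable hα h₂ ξ 0 t)]
    ring
  have hbd2 : ∀ ξ, |∫ s in (0:ℝ)..t, (qf α X₁ s ξ - qf α X₂ s ξ)| ≤ R := by
    intro ξ
    have h := intervalIntegral.norm_integral_le_abs_of_norm_le (μ := volume) (a := (0:ℝ)) (b := t)
      (f := fun s => qf α X₁ s ξ - qf α X₂ s ξ) (g := fun s => (1/4) * Gn s)
      (Eventually.of_forall fun s => by
        simp only [Real.norm_eq_abs, hGn]
        rw [hGn_eq s]
        exact central hα h₁ h₂ s ξ) hGnii
    rw [Real.norm_eq_abs] at h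
    calc |∫ s in (0:ℝ)..t, (qf α X₁ s ξ - qf α X₂ s ξ)| ≤ |R| := h
    _ = R := abs_of_nonneg hRnn
  obtain ⟨⟨C₁, hC₁⟩, -⟩ := h₁.2.1
  obtain ⟨⟨C₂, hC₂⟩, -⟩ := h₂.2.1
  have hfin : eLpNormEssSup (fun ξ => X₁.U ξ - X₂.U ξ) volume ≠ ⊤ := by
    refine ne_top_of_le_ne_top (b := ENNReal.ofReal (C₁ + C₂)) ENNReal.ofReal_ne_top ?_
    apply eLpNormEssSup_le_of_ae_bound (C := C₁ + C₂)
    exact Eventually.of_forall fun ξ => by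
      rw [Real.norm_eq_abs]
      calc |X₁.U ξ - X₂.U ξ| ≤ |X₁.U ξ| + |X₂.U ξ| := abs_sub _ _
      _ ≤ C₁ + C₂ := by have := hC₁ ξ; have := hC₂ ξ; linarith
  have hNval : N = (eLpNormEssSup (fun ξ => X₁.U ξ - X₂.U ξ) volume).toReal := by
    rw [hN, hU0]; unfold nrm; rw [eLpNorm_exponent_top]
  have hNnn : 0 ≤ N := by
    rw [hNval]; exact ENNReal.toReal_nonneg
  have hae : ∀ᵐ ξ ∂(volume : Measure ℝ), |X₁.U ξ - X₂.U ξ| ≤ N := by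
    filter_upwards [ae_le_eLpNormEssSup (f := fun ξ => X₁.U ξ - X₂.U ξ) (μ := volume)]
      with ξ hξ
    rw [hNval]
    have h2 := ENNReal.toReal_mono hfin hξ
    simpa [Real.norm_eq_abs] using h2
  have hfinal : ∀ᵐ ξ ∂(volume : Measure ℝ), ‖Usol α X₁ t ξ - Usol α X₂ t ξ‖ ≤ N + R := by
    filter_upwards [hae] with ξ hξ
    rw [Real.norm_eq_abs, hid ξ]
    calc |(X₁.U ξ - X₂.U ξ) + ∫ s in (0:ℝ)..t, (qf α X₁ s ξ - qf α X₂ s ξ)|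
        ≤ |X₁.U ξ - X₂.U ξ| + |∫ s in (0:ℝ)..t, (qf α X₁ s ξ - qf α X₂ s ξ)| := abs_add_le _ _
    _ ≤ N + R := add_le_add hξ (hbd2 ξ)
  have hle : eLpNorm (fun ξ => Usol α X₁ t ξ - Usol α X₂ t ξ) ⊤ volume
      ≤ ENNReal.ofReal (N + R) := by
    rw [eLpNorm_exponent_top]
    exact eLpNormEssSup_le_of_ae_bound hfinal
  have hmain : nrm ⊤ (fun ξ => Usol α X₁ t ξ - Usol α X₂ t ξ) ≤ N + R := by
    unfold nrm
    exact ENNReal.toReal_le_of_le_ofReal (by linarith) hle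
  have hRfinal : R = (1/4) * ∫ s in (0:ℝ)..t, Gn s := by
    rw [hR, intervalIntegral.integral_const_mul]
  rw [hRfinal] at hmain
  exact hmain
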